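/- arXiv:2605.30179 — 2 statements merged into one kernel-verified Lean document; each statement's English description precedes it below -/
import Mathlib

section
/- For u ∈ ℝ and δ > 0, the function f(m) = (1/2)(log(δ²/m) + (m + (m−u)²)/δ² − 1) on (0,∞) attains its unique global minimum at m* = (2u − 1 + √((2u−1)² + 8δ²))/4, and m* > 0. -/
open Real Set

/-- `f(m) = (1/2)(log(δ²/m) + (m + (m−u)²)/δ² − 1)` on `(0,∞)` attains its unique
global minimum at `m* = (2u−1+√((2u−1)²+8δ²))/4`, and `m* > 0`. -/
theorem kl_proxy_unique_min (u δ : ℝ) (hδ : 0 < δ) :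
    let f : ℝ → ℝ := fun m => (1/2) * (Real.log (δ^2 / m) + (m + (m - u)^2) / δ^2 - 1)
    let mstar := (2*u - 1 + Real.sqrt ((2*u - 1)^2 + 8*δ^2)) / 4
    0 < mstar ∧ ∀ m ∈ Set.Ioi (0:ℝ), m ≠ mstar → f mstar < f m := by
  intro f mstar
  set c : ℝ := 2*u - 1 with hc
  set s : ℝ := Real.sqrt (c^2 + 8*δ^2) with hsdef
  have hs2 : s^2 = c^2 + 8*δ^2 := Real.sq_sqrt (by positivity)
  have habs : |c| < s := by
    rw [← Real.sqrt_sq_eq_abs]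
    exact Real.sqrt_lt_sqrt (by positivity) (by nlinarith)
  have hms : mstar = (c + s)/4 := rfl
  have ha : 0 < mstar := by
    rw [hms]
    have := neg_abs_le c
    linarith
  have key : 2*mstar^2 + (1 - 2*u)*mstar = δ^2 := by
    rw [hms]; linear_combination hs2/8 + ((c+s)/4)*hc
  refine ⟨ha, fun m hm hne => ?_⟩
  have hm0 : 0 < m := hm
  have hlog : Real.log m - Real.log mstar ≤ m/mstar - 1 := by
    have h := Real.log_le_sub_one_of_pos (show 0 < m/mstar by positivity)
    rwa [Real.log_div hm0.ne' ha.ne'] at h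
  have hBA : (m + (m-u)^2)/δ^2 - (mstar+(mstar-u)^2)/δ^2
      = (m/mstar - 1) + (m-mstar)^2/δ^2 := by
    field_simp
    linear_combination (m - mstar) * key
  have hsq : 0 < (m - mstar)^2/δ^2 := by
    have : m - mstar ≠ 0 := sub_ne_zero.mpr hne
    positivity
  show (1/2) * (Real.log (δ^2 / mstar) + (mstar + (mstar - u)^2) / δ^2 - 1)
      < (1/2) * (Real.log (δ^2 / m) + (m + (m - u)^2) / δ^2 - 1)
  rw [Real.log_div (by positivity) hm0.ne', Real.log_div (by positivity) ha.ne']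
  nlinarith [hlog, hBA, hsq]
end

section
/- Let σ be a Rayleigh random variable with scale parameter related to b > 0 (density proportional to σ·exp(−σ²/(2b²)) suitably scaled), and conditional on σ let X ~ N(0, σ²). Then the marginal density of X is (1/(2b)) exp(−|x|/b), i.e., X ~ Laplace(0, b). Formally: for all x ∈ ℝ, ∫₀^∞ (1/√(2πσ²)) e^{−x²/(2σ²)} · (σ/b²) e^{−σ²/(2b²)} dσ = (1/(2b)) e^{−|x|/b}. -/
open Real MeasureTheory Set

section Glasser

variable {a c : ℝ}

private lemma glasser_injOn (ha : 0 < a) (hc : 0 < c) :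
    InjOn (fun t : ℝ => a * t - c / t) (Ioi 0) := by
  have mono : StrictMonoOn (fun t : ℝ => a * t - c / t) (Ioi 0) := by
    intro t ht u hu htu
    have ht0 : (0:ℝ) < t := ht
    have hu0 : (0:ℝ) < u := hu
    have h1 : a * t < a * u := by nlinarith
    have h2 : c / u < c / t := div_lt_div_of_pos_left hc ht0 htu
    simp only
    linarith
  exact mono.injOn

private lemma glasser_image (ha : 0 < a) (hc : 0 < c) :
    (fun t : ℝ => a * t - c / t) '' Ioi 0 = univ := by
  ext y
  simp only [mem_image, mem_univ, iff_true]
  set s := Real.sqrt (y ^ 2 + 4 * a * c) with hs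
  have hs2 : s ^ 2 = y ^ 2 + 4 * a * c := Real.sq_sqrt (by positivity)
  have hsy : |y| < s := by
    rw [← Real.sqrt_sq_eq_abs, hs]
    apply Real.sqrt_lt_sqrt (sq_nonneg y)
    nlinarith
  have hys : -s < y := by
    rcases abs_lt.mp hsy with ⟨h1, h2⟩; linarith
  have htpos : (0:ℝ) < (y + s) / (2 * a) := by
    have : 0 < y + s := by linarith
    positivity
  refine ⟨(y + s) / (2 * a), htpos, ?_⟩
  have hane : (2 * a) ≠ 0 := by positivity
  have hyne : y + s ≠ 0 := by linarith
  field_simp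
  nlinarith [hs2]

private lemma glasser_deriv (ha : 0 < a) {t : ℝ} (ht : t ∈ Ioi (0:ℝ)) :
    HasDerivWithinAt (fun t : ℝ => a * t - c / t) (a + c / t ^ 2) (Ioi 0) t := by
  have ht0 : t ≠ 0 := ne_of_gt ht
  have h1 : HasDerivAt (fun t : ℝ => a * t - c / t) (a + c / t ^ 2) t := by
    have h2 : HasDerivAt (fun t : ℝ => c / t) (c * (-(t ^ 2)⁻¹)) t := by
      simpa [div_eq_mul_inv] using (hasDerivAt_inv ht0).const_mul c
    have h3 : HasDerivAt (fun t : ℝ => a * t) a t := by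
      simpa using (hasDerivAt_id t).const_mul a
    have := h3.sub h2
    exact this.congr_deriv (by ring)
  exact h1.hasDerivWithinAt

private lemma glasser_integrable (ha : 0 < a) (hc : 0 < c) :
    IntegrableOn (fun t : ℝ => Real.exp (-(a * t - c / t) ^ 2)) (Ioi 0) := by
  have hbase : IntegrableOn (fun t : ℝ => Real.exp (2 * a * c) *
      Real.exp (-(a ^ 2) * t ^ 2)) (Ioi 0) := by
    exact ((integrable_exp_neg_mul_sq (by positivity : 0 < a ^ 2)).integrableOn).const_mul _
  refine hbase.integrable.mono' ?_ ?_
  · apply Measurable.aestronglyMeasurable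
    fun_prop
  · filter_upwards [self_mem_ae_restrict (measurableSet_Ioi)] with t ht
    have ht0 : (0:ℝ) < t := ht
    rw [Real.norm_eq_abs, abs_of_pos (Real.exp_pos _)]
    rw [← Real.exp_add]
    apply Real.exp_le_exp.mpr
    have key : a * t * (c / t) = a * c := by field_simp
    nlinarith [sq_nonneg (c / t), sq_nonneg (a * t - c / t)]

private lemma glasser_sum (ha : 0 < a) (hc : 0 < c) :
    ∫ t in Ioi (0:ℝ), (a + c / t ^ 2) * Real.exp (-(a * t - c / t) ^ 2) =
      Real.sqrt π := by
  have him := integral_image_eq_integral_abs_deriv_smul (measurableSet_Ioi)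
      (fun t ht => glasser_deriv ha ht) (glasser_injOn ha hc)
      (fun u : ℝ => Real.exp (-u ^ 2))
  rw [glasser_image ha hc] at him
  rw [Measure.restrict_univ] at him
  have hgauss : ∫ u : ℝ, Real.exp (-u ^ 2) = Real.sqrt π := by
    simpa using integral_gaussian 1
  rw [hgauss] at him
  rw [him]
  refine setIntegral_congr_fun measurableSet_Ioi fun t ht => ?_
  have ht0 : (0:ℝ) < t := ht
  have hpos : 0 < a + c / t ^ 2 := by positivity
  simp [abs_of_pos hpos, smul_eq_mul]

private lemma glasser_sym (ha : 0 < a) (hc : 0 < c) :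
    ∫ t in Ioi (0:ℝ), (c / t ^ 2) * Real.exp (-(a * t - c / t) ^ 2) =
      ∫ t in Ioi (0:ℝ), a * Real.exp (-(a * t - c / t) ^ 2) := by
  -- substitution t ↦ c / (a t)
  have hderiv : ∀ t ∈ Ioi (0:ℝ), HasDerivWithinAt (fun t : ℝ => c / (a * t))
      (-(c / a) / t ^ 2) (Ioi 0) t := by
    intro t ht
    have ht0 : t ≠ 0 := ne_of_gt ht
    have h2 : HasDerivAt (fun t : ℝ => (c / a) / t) ((c / a) * (-(t ^ 2)⁻¹)) t := by
      simpa [div_eq_mul_inv] using (hasDerivAt_inv ht0).const_mul (c / a)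
    have heq : (fun t : ℝ => c / (a * t)) = fun t : ℝ => (c / a) / t := by
      funext s; rw [div_div]
    rw [heq]
    exact h2.hasDerivWithinAt.congr_deriv (by ring)
  have ha' : a ≠ 0 := ne_of_gt ha
  have hc' : c ≠ 0 := ne_of_gt hc
  have hinv : ∀ t : ℝ, t ≠ 0 → c / (a * (c / (a * t))) = t := by
    intro t ht'
    field_simp
  have hinj : InjOn (fun t : ℝ => c / (a * t)) (Ioi 0) := by
    intro t ht u hu htu
    have h2 : c / (a * (c / (a * t))) = c / (a * (c / (a * u))) := by
      simpa using congrArg (fun z => c / (a * z)) htu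
    rwa [hinv t (ne_of_gt ht), hinv u (ne_of_gt hu)] at h2
  have himg : (fun t : ℝ => c / (a * t)) '' Ioi 0 = Ioi 0 := by
    ext y
    simp only [mem_image, mem_Ioi]
    constructor
    · rintro ⟨t, ht, rfl⟩; positivity
    · intro hy
      refine ⟨c / (a * y), by positivity, ?_⟩
      field_simp
  have him := integral_image_eq_integral_abs_deriv_smul (measurableSet_Ioi)
      hderiv hinj (fun u : ℝ => a * Real.exp (-(a * u - c / u) ^ 2))
  rw [himg] at him
  rw [him]
  refine setIntegral_congr_fun measurableSet_Ioi fun t ht => ?_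
  have ht0 : (0:ℝ) < t := ht
  have habs : |(-(c / a) / t ^ 2)| = (c / a) / t ^ 2 := by
    rw [neg_div, abs_neg, abs_of_pos (by positivity)]
  have h1 : a * (c / (a * t)) = c / t := by field_simp
  have h2 : c / (c / (a * t)) = a * t := by
    rw [div_div_eq_mul_div, mul_comm c (a * t), mul_div_assoc, div_self (ne_of_gt hc), mul_one]
  have h3 : (a * (c / (a * t)) - c / (c / (a * t))) ^ 2 = (a * t - c / t) ^ 2 := by
    rw [h1, h2]; ring
  simp only [smul_eq_mul, habs, h3]
  field_simp

private lemma glasser_integrable' (ha : 0 < a) (hc : 0 < c) :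
    IntegrableOn (fun t : ℝ => (c / t ^ 2) * Real.exp (-(a * t - c / t) ^ 2)) (Ioi 0) := by
  have hbase : IntegrableOn (fun t : ℝ => Real.exp (2 * a * c) *
      Real.exp (-(a ^ 2) * t ^ 2)) (Ioi 0) := by
    exact ((integrable_exp_neg_mul_sq (by positivity : 0 < a ^ 2)).integrableOn).const_mul _
  -- use the substitution integrability via image
  have hint : IntegrableOn (fun u : ℝ => a * Real.exp (-(a * u - c / u) ^ 2)) (Ioi 0) :=
    (glasser_integrable ha hc).const_mul a
  have hderiv : ∀ t ∈ Ioi (0:ℝ), HasDerivWithinAt (fun t : ℝ => c / (a * t))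
      (-(c / a) / t ^ 2) (Ioi 0) t := by
    intro t ht
    have ht0 : t ≠ 0 := ne_of_gt ht
    have h2 : HasDerivAt (fun t : ℝ => (c / a) / t) ((c / a) * (-(t ^ 2)⁻¹)) t := by
      simpa [div_eq_mul_inv] using (hasDerivAt_inv ht0).const_mul (c / a)
    have heq : (fun t : ℝ => c / (a * t)) = fun t : ℝ => (c / a) / t := by
      funext s; rw [div_div]
    rw [heq]
    exact h2.hasDerivWithinAt.congr_deriv (by ring)
  have ha' : a ≠ 0 := ne_of_gt ha
  have hc' : c ≠ 0 := ne_of_gt hc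
  have hinv : ∀ t : ℝ, t ≠ 0 → c / (a * (c / (a * t))) = t := by
    intro t ht'
    field_simp
  have hinj : InjOn (fun t : ℝ => c / (a * t)) (Ioi 0) := by
    intro t ht u hu htu
    have h2 : c / (a * (c / (a * t))) = c / (a * (c / (a * u))) := by
      simpa using congrArg (fun z => c / (a * z)) htu
    rwa [hinv t (ne_of_gt ht), hinv u (ne_of_gt hu)] at h2
  have himg : (fun t : ℝ => c / (a * t)) '' Ioi 0 = Ioi 0 := by
    ext y
    simp only [mem_image, mem_Ioi]
    constructor
    · rintro ⟨t, ht, rfl⟩; positivity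
    · intro hy
      refine ⟨c / (a * y), by positivity, ?_⟩
      field_simp
  have hiff := integrableOn_image_iff_integrableOn_abs_deriv_smul (measurableSet_Ioi)
      hderiv hinj (fun u : ℝ => a * Real.exp (-(a * u - c / u) ^ 2))
  rw [himg] at hiff
  have := hiff.mp hint
  refine this.congr_fun (fun t ht => ?_) measurableSet_Ioi
  have ht0 : (0:ℝ) < t := ht
  have habs : |(-(c / a) / t ^ 2)| = (c / a) / t ^ 2 := by
    rw [neg_div, abs_neg, abs_of_pos (by positivity)]
  have h1 : a * (c / (a * t)) = c / t := by field_simp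
  have h2 : c / (c / (a * t)) = a * t := by
    rw [div_div_eq_mul_div, mul_comm c (a * t), mul_div_assoc, div_self (ne_of_gt hc), mul_one]
  have h3 : (a * (c / (a * t)) - c / (c / (a * t))) ^ 2 = (a * t - c / t) ^ 2 := by
    rw [h1, h2]; ring
  simp only [smul_eq_mul, habs, h3]
  field_simp

lemma glasser (ha : 0 < a) (hc : 0 < c) :
    ∫ t in Ioi (0:ℝ), Real.exp (-(a * t - c / t) ^ 2) = Real.sqrt π / (2 * a) := by
  have hIa : IntegrableOn (fun t : ℝ => a * Real.exp (-(a * t - c / t) ^ 2)) (Ioi 0) :=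
    (glasser_integrable ha hc).const_mul a
  have hIc := glasser_integrable' ha hc
  have hsplit : ∫ t in Ioi (0:ℝ), (a + c / t ^ 2) * Real.exp (-(a * t - c / t) ^ 2) =
      (∫ t in Ioi (0:ℝ), a * Real.exp (-(a * t - c / t) ^ 2)) +
      ∫ t in Ioi (0:ℝ), (c / t ^ 2) * Real.exp (-(a * t - c / t) ^ 2) := by
    rw [← integral_add hIa hIc]
    refine setIntegral_congr_fun measurableSet_Ioi fun t ht => ?_
    ring
  rw [glasser_sum ha hc, glasser_sym ha hc] at hsplit
  have h2 : Real.sqrt π = 2 * (a * ∫ t in Ioi (0:ℝ), Real.exp (-(a * t - c / t) ^ 2)) := by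
    rw [hsplit, integral_const_mul]; ring
  have ha' : (2 * a) ≠ 0 := by positivity
  field_simp at h2 ⊢
  linarith

end Glasser

/-- Gaussian scale mixture over a Rayleigh scale gives a Laplace marginal:
for all `x ∈ ℝ` and `b > 0`,
`∫₀^∞ (1/√(2πσ²)) e^{−x²/(2σ²)} · (σ/b²) e^{−σ²/(2b²)} dσ = (1/(2b)) e^{−|x|/b}`. -/
theorem rayleigh_gaussian_mixture_is_laplace (b : ℝ) (hb : 0 < b) (x : ℝ) :
    (∫ σ in Set.Ioi (0:ℝ),
        (1 / Real.sqrt (2 * Real.pi * σ^2)) * Real.exp (-x^2 / (2 * σ^2)) *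
          ((σ / b^2) * Real.exp (-σ^2 / (2 * b^2)))) =
      (1 / (2 * b)) * Real.exp (-|x| / b) := by
  have hpi : (0:ℝ) < π := Real.pi_pos
  have h2pi : Real.sqrt (2 * π) = Real.sqrt 2 * Real.sqrt π := by
    rw [← Real.sqrt_mul (by norm_num)]
  have hs2 : (0:ℝ) < Real.sqrt 2 := Real.sqrt_pos.mpr (by norm_num)
  have hsq2 : (Real.sqrt 2) ^ 2 = 2 := Real.sq_sqrt (by norm_num)
  have hspi : (0:ℝ) < Real.sqrt π := Real.sqrt_pos.mpr hpi
  have hsqrtfac : ∀ t : ℝ, t ∈ Ioi (0:ℝ) →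
      Real.sqrt (2 * π * t ^ 2) = Real.sqrt (2 * π) * t := by
    intro t ht
    rw [Real.sqrt_mul (by positivity), Real.sqrt_sq (le_of_lt ht)]
  rcases eq_or_ne x 0 with rfl | hx
  · -- x = 0 case
    have hcongr : ∀ t ∈ Ioi (0:ℝ),
        (1 / Real.sqrt (2 * π * t^2)) * Real.exp (-(0:ℝ)^2 / (2 * t^2)) *
          ((t / b^2) * Real.exp (-t^2 / (2 * b^2))) =
        (1 / (Real.sqrt (2 * π) * b ^ 2)) * Real.exp (-(1 / (2 * b ^ 2)) * t ^ 2) := by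
      intro t ht
      have ht0 : (0:ℝ) < t := ht
      rw [hsqrtfac t ht]
      have : -(0:ℝ)^2 / (2 * t^2) = 0 := by simp
      rw [this, Real.exp_zero]
      have : -t ^ 2 / (2 * b ^ 2) = -(1 / (2 * b ^ 2)) * t ^ 2 := by field_simp
      rw [this]
      field_simp
    rw [setIntegral_congr_fun measurableSet_Ioi hcongr]
    rw [integral_const_mul, integral_gaussian_Ioi]
    have h1 : π / (1 / (2 * b ^ 2)) = 2 * π * b ^ 2 := by field_simp
    rw [h1]
    have h2 : Real.sqrt (2 * π * b ^ 2) = Real.sqrt (2 * π) * b := by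
      rw [Real.sqrt_mul (by positivity), Real.sqrt_sq hb.le]
    rw [h2]
    have h3 : |(0:ℝ)| = 0 := abs_zero
    rw [h3]
    have hne : Real.sqrt (2 * π) ≠ 0 := by positivity
    rw [neg_zero, zero_div, Real.exp_zero]
    field_simp
  · -- x ≠ 0 case
    set a : ℝ := 1 / (Real.sqrt 2 * b) with ha_def
    set c : ℝ := |x| / Real.sqrt 2 with hc_def
    have ha : 0 < a := by positivity
    have hxabs : 0 < |x| := abs_pos.mpr hx
    have hc : 0 < c := by positivity
    have hac : 2 * a * c = |x| / b := by
      rw [ha_def, hc_def]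
      field_simp
      linear_combination (-1 : ℝ) * hsq2
    have ha2 : a ^ 2 = 1 / (2 * b ^ 2) := by
      rw [ha_def]; rw [div_pow, mul_pow, hsq2]; norm_num
    have hc2 : c ^ 2 = x ^ 2 / 2 := by
      rw [hc_def, div_pow, hsq2, sq_abs]
    have hcongr : ∀ t ∈ Ioi (0:ℝ),
        (1 / Real.sqrt (2 * π * t^2)) * Real.exp (-x^2 / (2 * t^2)) *
          ((t / b^2) * Real.exp (-t^2 / (2 * b^2))) =
        (Real.exp (-|x| / b) / (Real.sqrt (2 * π) * b ^ 2)) *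
          Real.exp (-(a * t - c / t) ^ 2) := by
      intro t ht
      have ht0 : (0:ℝ) < t := ht
      rw [hsqrtfac t ht]
      have hexp : -x^2 / (2 * t^2) + -t^2 / (2 * b^2) = -|x| / b + -(a * t - c / t) ^ 2 := by
        have hexpand : (a * t - c / t) ^ 2 = a ^ 2 * t ^ 2 - 2 * a * c + c ^ 2 / t ^ 2 := by
          have : a * t * (c / t) = a * c := by field_simp
          field_simp
          ring
        rw [hexpand, ha2, hc2, hac]
        field_simp
        ring
      have : Real.exp (-x^2 / (2 * t^2)) * Real.exp (-t^2 / (2 * b^2)) =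
          Real.exp (-|x| / b) * Real.exp (-(a * t - c / t) ^ 2) := by
        rw [← Real.exp_add, ← Real.exp_add, hexp]
      calc (1 / (Real.sqrt (2 * π) * t)) * Real.exp (-x^2 / (2 * t^2)) *
          ((t / b^2) * Real.exp (-t^2 / (2 * b^2)))
          = (1 / (Real.sqrt (2 * π) * t)) * (t / b^2) *
            (Real.exp (-x^2 / (2 * t^2)) * Real.exp (-t^2 / (2 * b^2))) := by ring
        _ = (1 / (Real.sqrt (2 * π) * t)) * (t / b^2) *
            (Real.exp (-|x| / b) * Real.exp (-(a * t - c / t) ^ 2)) := by rw [this]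
        _ = (Real.exp (-|x| / b) / (Real.sqrt (2 * π) * b ^ 2)) *
            Real.exp (-(a * t - c / t) ^ 2) := by
            field_simp
    rw [setIntegral_congr_fun measurableSet_Ioi hcongr]
    rw [integral_const_mul, glasser ha hc]
    rw [h2pi, ha_def]
    have hbne : b ≠ 0 := ne_of_gt hb
    field_simp
end
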